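/- Let Ω ⊆ ℝ³ be open and f : Ω → ℂ a nonvanishing C² solution of (-Δ + ν)f = 0 for some function ν : Ω → ℂ. Then for every scalar C² function g : Ω → ℂ, (D + M^{Df/f})(D - M^{Df/f})g = (-Δ + ν)g, where M^a denotes the operator of quaternionic multiplication by a from the right and Df/f is the purely vectorial quaternion (grad f)/f. -/

import Mathlib

noncomputable section


/-- ℝ³ -/
abbrev V3 := Fin 3 → ℝ
/-- Complex quaternions ℍ(ℂ) -/
abbrev HC := Quaternion ℂ

/-- partial derivative ∂ₖ of a function on ℝ³ -/
noncomputable def pd {E : Type*} [NormedAddCommGroup E] [NormedSpace ℝ E]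
    (k : Fin 3) (g : V3 → E) (x : V3) : E :=
  fderiv ℝ g x (Pi.single k 1)

noncomputable def grad {E : Type*} [NormedAddCommGroup E] [NormedSpace ℝ E]
    (g : V3 → E) (x : V3) : Fin 3 → E := fun k => pd k g x

noncomputable def dvg {E : Type*} [NormedAddCommGroup E] [NormedSpace ℝ E]
    (F : V3 → Fin 3 → E) (x : V3) : E :=
  pd 0 (fun y => F y 0) x + pd 1 (fun y => F y 1) x + pd 2 (fun y => F y 2) x

noncomputable def rot {E : Type*} [NormedAddCommGroup E] [NormedSpace ℝ E]
    (F : V3 → Fin 3 → E) (x : V3) : Fin 3 → E :=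
  ![pd 1 (fun y => F y 2) x - pd 2 (fun y => F y 1) x,
    pd 2 (fun y => F y 0) x - pd 0 (fun y => F y 2) x,
    pd 0 (fun y => F y 1) x - pd 1 (fun y => F y 0) x]

/-- scalar Laplacian -/
noncomputable def lapS {E : Type*} [NormedAddCommGroup E] [NormedSpace ℝ E]
    (g : V3 → E) (x : V3) : E :=
  pd 0 (pd 0 g) x + pd 1 (pd 1 g) x + pd 2 (pd 2 g) x

/-- purely vectorial quaternion from a ℂ³ vector -/
def vecq (v : Fin 3 → ℂ) : HC := ⟨0, v 0, v 1, v 2⟩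
/-- scalar quaternion -/
def scq (a : ℂ) : HC := ⟨a, 0, 0, 0⟩

def e1 : HC := ⟨0,1,0,0⟩
def e2 : HC := ⟨0,0,1,0⟩
def e3 : HC := ⟨0,0,0,1⟩

/-- vector part of a quaternion, as a ℂ³ vector -/
def vecPart (a : HC) : Fin 3 → ℂ := ![a.imI, a.imJ, a.imK]

/-- quaternionic conjugation C_H -/
def qconj (a : HC) : HC := ⟨a.re, -a.imI, -a.imJ, -a.imK⟩

/-- componentwise partial derivative of an ℍ(ℂ)-valued function -/
noncomputable def qpd (k : Fin 3) (F : V3 → HC) (x : V3) : HC :=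
  ⟨pd k (fun y => (F y).re) x, pd k (fun y => (F y).imI) x,
   pd k (fun y => (F y).imJ) x, pd k (fun y => (F y).imK) x⟩

/-- The Moisil–Teodorescu (Dirac) operator D = Σₖ iₖ∂ₖ -/
noncomputable def Dq (F : V3 → HC) (x : V3) : HC :=
  e1 * qpd 0 F x + e2 * qpd 1 F x + e3 * qpd 2 F x

/-- componentwise Laplacian of an ℍ(ℂ)-valued function -/
noncomputable def qlap (F : V3 → HC) (x : V3) : HC :=
  qpd 0 (qpd 0 F) x + qpd 1 (qpd 1 F) x + qpd 2 (qpd 2 F) x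

/-- ContDiffOn for ℍ(ℂ)-valued functions, componentwise -/
def QContDiffOn (n : ℕ∞) (F : V3 → HC) (s : Set V3) : Prop :=
  ContDiffOn ℝ n (fun x => (F x).re) s ∧ ContDiffOn ℝ n (fun x => (F x).imI) s ∧
  ContDiffOn ℝ n (fun x => (F x).imJ) s ∧ ContDiffOn ℝ n (fun x => (F x).imK) s

/-- euclidean norm on ℝ³ -/
noncomputable def nrm (x : V3) : ℝ := Real.sqrt (x 0 ^ 2 + x 1 ^ 2 + x 2 ^ 2)

/-- fundamental solution of the Helmholtz operator -/
noncomputable def theta (α : ℂ) (x : V3) : ℂ :=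
  -Complex.exp (Complex.I * α * (nrm x : ℂ)) / (4 * Real.pi * (nrm x : ℂ))

/-- x as a purely vectorial quaternion -/
def xq (x : V3) : HC := vecq fun k => ((x k : ℝ) : ℂ)

private lemma diff_fderiv {u : V3 → ℂ} {x : V3} (hu : ContDiffAt ℝ 2 u x) :
    DifferentiableAt ℝ (fderiv ℝ u) x :=
  (hu.fderiv_right (m := 1) (by norm_num)).differentiableAt one_ne_zero

private lemma diff_pd {u : V3 → ℂ} {x : V3} (hu : ContDiffAt ℝ 2 u x) (j : Fin 3) :
    DifferentiableAt ℝ (pd j u) x :=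
  (diff_fderiv hu).clm_apply (differentiableAt_const _)

private lemma pd_pd {u : V3 → ℂ} {x : V3} (hu : ContDiffAt ℝ 2 u x) (k j : Fin 3) :
    pd k (pd j u) x = fderiv ℝ (fderiv ℝ u) x (Pi.single k 1) (Pi.single j 1) := by
  show fderiv ℝ (fun y => fderiv ℝ u y (Pi.single j 1)) x (Pi.single k 1) = _
  rw [fderiv_clm_apply (diff_fderiv hu) (differentiableAt_const _)]
  simp

private lemma pd_symm {u : V3 → ℂ} {x : V3} (hu : ContDiffAt ℝ 2 u x) (k j : Fin 3) :
    pd k (pd j u) x = pd j (pd k u) x := by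
  rw [pd_pd hu, pd_pd hu]
  exact (hu.isSymmSndFDerivAt (by norm_num)) _ _

private lemma pd_sub {u v : V3 → ℂ} {x : V3} (hu : DifferentiableAt ℝ u x)
    (hv : DifferentiableAt ℝ v x) (k : Fin 3) :
    pd k (fun y => u y - v y) x = pd k u x - pd k v x := by
  unfold pd; rw [fderiv_fun_sub hu hv]; rfl

private lemma pd_mul {u v : V3 → ℂ} {x : V3} (hu : DifferentiableAt ℝ u x)
    (hv : DifferentiableAt ℝ v x) (k : Fin 3) :
    pd k (fun y => u y * v y) x = u x * pd k v x + v x * pd k u x := by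
  unfold pd; rw [fderiv_fun_mul hu hv]; simp [smul_eq_mul]

private lemma pd_inv {u : V3 → ℂ} {x : V3} (hu : DifferentiableAt ℝ u x) (h0 : u x ≠ 0)
    (k : Fin 3) :
    pd k (fun y => (u y)⁻¹) x = -((u x)⁻¹ * pd k u x * (u x)⁻¹) := by
  have h1 : pd k (fun y => (u y)⁻¹) x
      = fderiv ℝ (fun w : ℂ => w⁻¹) (u x) (fderiv ℝ u x (Pi.single k 1)) := by
    unfold pd
    rw [show (fun y => (u y)⁻¹) = (fun w : ℂ => w⁻¹) ∘ u from rfl,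
        fderiv_comp x (differentiableAt_inv h0) hu]
    rfl
  rw [h1, show (fun w : ℂ => w⁻¹) = (Inv.inv : ℂ → ℂ) from rfl, fderiv_inv' h0]
  simp only [ContinuousLinearMap.neg_apply, ContinuousLinearMap.mulLeftRight_apply]
  rfl

private lemma pd_const (x : V3) (k : Fin 3) : pd k (fun _ : V3 => (0:ℂ)) x = 0 := by
  unfold pd; rw [fderiv_fun_const]; rfl

set_option maxHeartbeats 1000000 in
/-- (D + M^{Df/f})(D - M^{Df/f})g = (-Δ + ν)g where f is a
nonvanishing solution of (-Δ + ν)f = 0. -/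
theorem stmt11 (Ω : Set V3) (hΩ : IsOpen Ω) (f ν : V3 → ℂ)
    (hf : ContDiffOn ℝ 2 f Ω) (hf0 : ∀ x ∈ Ω, f x ≠ 0)
    (hfe : ∀ x ∈ Ω, -lapS f x + ν x * f x = 0)
    (g : V3 → ℂ) (hg : ContDiffOn ℝ 2 g Ω) :
    ∀ x ∈ Ω,
      Dq (fun y => vecq (grad g y) - scq (g y) * vecq fun k => grad f y k / f y) x
        + (vecq (grad g x) - scq (g x) * vecq fun k => grad f x k / f x)
            * vecq (fun k => grad f x k / f x)
      = scq (-lapS g x + ν x * g x) := by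
  intro x hx
  have hfx : ContDiffAt ℝ 2 f x := hf.contDiffAt (hΩ.mem_nhds hx)
  have hgx : ContDiffAt ℝ 2 g x := hg.contDiffAt (hΩ.mem_nhds hx)
  have hdf : DifferentiableAt ℝ f x := hfx.differentiableAt (by norm_num)
  have hdg : DifferentiableAt ℝ g x := hgx.differentiableAt (by norm_num)
  have hF0 : f x ≠ 0 := hf0 x hx
  have hdinv : DifferentiableAt ℝ (fun y => (f y)⁻¹) x := hdf.inv hF0
  have hdq : ∀ j : Fin 3, DifferentiableAt ℝ (fun y => pd j f y * (f y)⁻¹) x :=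
    fun j => (diff_pd hfx j).mul hdinv
  have key : ∀ j k : Fin 3,
      pd k (fun y => pd j g y - g y * (pd j f y * (f y)⁻¹)) x
      = pd k (pd j g) x - g x * pd k (pd j f) x * (f x)⁻¹
        + g x * pd j f x * pd k f x * ((f x)⁻¹ * (f x)⁻¹)
        - pd j f x * (f x)⁻¹ * pd k g x := by
    intro j k
    rw [pd_sub (v := fun y => g y * (pd j f y * (f y)⁻¹)) (diff_pd hgx j) (hdg.mul (hdq j)), pd_mul hdg (hdq j),
        pd_mul (diff_pd hfx j) hdinv, pd_inv hdf hF0]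
    show _ - _ = _
    ring
  -- clean component functions
  have hcomp : (fun y => vecq (grad g y) - scq (g y) * vecq fun k => grad f y k / f y)
      = fun y => (⟨0,
          pd 0 g y - g y * (pd 0 f y * (f y)⁻¹),
          pd 1 g y - g y * (pd 1 f y * (f y)⁻¹),
          pd 2 g y - g y * (pd 2 f y * (f y)⁻¹)⟩ : HC) := by
    funext y
    ext <;>
      simp only [Quaternion.re_sub, Quaternion.imI_sub, Quaternion.imJ_sub, Quaternion.imK_sub,
        Quaternion.re_mul, Quaternion.imI_mul, Quaternion.imJ_mul, Quaternion.imK_mul] <;>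
      simp [vecq, scq, grad, div_eq_mul_inv]
  rw [hcomp]
  have hgsym01 : pd 1 (pd 0 g) x = pd 0 (pd 1 g) x := pd_symm hgx 1 0
  have hgsym02 : pd 2 (pd 0 g) x = pd 0 (pd 2 g) x := pd_symm hgx 2 0
  have hgsym12 : pd 2 (pd 1 g) x = pd 1 (pd 2 g) x := pd_symm hgx 2 1
  have hfsym01 : pd 1 (pd 0 f) x = pd 0 (pd 1 f) x := pd_symm hfx 1 0
  have hfsym02 : pd 2 (pd 0 f) x = pd 0 (pd 2 f) x := pd_symm hfx 2 0
  have hfsym12 : pd 2 (pd 1 f) x = pd 1 (pd 2 f) x := pd_symm hfx 2 1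
  have hnu2 : ν x = (pd 0 (pd 0 f) x + pd 1 (pd 1 f) x + pd 2 (pd 2 f) x) * (f x)⁻¹ := by
    have h := hfe x hx
    unfold lapS at h
    field_simp
    linear_combination h
  ext <;>
    simp only [Dq, Quaternion.re_mul,
      Quaternion.imI_mul, Quaternion.imJ_mul, Quaternion.imK_mul, Quaternion.re_add,
      Quaternion.imI_add, Quaternion.imJ_add, Quaternion.imK_add, Quaternion.re_sub,
      Quaternion.imI_sub, Quaternion.imJ_sub, Quaternion.imK_sub] <;>
    simp only [qpd, e1, e2, e3, vecq, scq, grad, lapS, key, pd_const,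
      div_eq_mul_inv]
  · rw [hnu2]; ring
  · simp only [hgsym01, hgsym02, hgsym12, hfsym01, hfsym02, hfsym12]; ring
  · simp only [hgsym01, hgsym02, hgsym12, hfsym01, hfsym02, hfsym12]; ring
  · simp only [hgsym01, hgsym02, hgsym12, hfsym01, hfsym02, hfsym12]; ring
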